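/- Kernel of T⁰₁ on the symmetric subspace: Let N ≥ 3 be an integer, k ∈ {1,…,⌊(N−1)/2⌋} and φ₀(x) = e^{−x²/2}. Then the kernel of T⁰₁ restricted to L²_k(G) is the one-dimensional span of Φ̃_{0,k} = (((N−k)/k)φ₀', …, ((N−k)/k)φ₀', −φ₀', …, −φ₀'), where the first k components equal ((N−k)/k)φ₀' and the last N−k components equal −φ₀'. That is, every V ∈ dom(T⁰₁) ∩ L²_k(G) with T⁰₁V = 0 is a scalar multiple of Φ̃_{0,k}, and Φ̃_{0,k} itself lies in this kernel. -/

import Mathlib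

open MeasureTheory Set Filter

noncomputable section

def mu : Measure ℝ := volume.restrict (Set.Ioi (0:ℝ))

def MemL2 (f : ℝ → ℂ) : Prop := MeasureTheory.MemLp f 2 mu

def MemH1 (f : ℝ → ℂ) : Prop :=
  ContinuousOn f (Set.Ici (0:ℝ)) ∧ (∀ x ∈ Set.Ioi (0:ℝ), DifferentiableAt ℝ f x) ∧
    MemL2 f ∧ MemL2 (deriv f)

def MemH2 (f : ℝ → ℂ) : Prop :=
  MemH1 f ∧ ContinuousOn (deriv f) (Set.Ici (0:ℝ)) ∧
    (∀ x ∈ Set.Ioi (0:ℝ), DifferentiableAt ℝ (deriv f) x) ∧ MemL2 (deriv (deriv f))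

def MemW1 (f : ℝ → ℂ) : Prop := MemH1 f ∧ MemL2 (fun x => (x : ℂ) * f x)

def MemW2 (f : ℝ → ℂ) : Prop := MemH2 f ∧ MemL2 (fun x => ((x : ℂ))^2 * f x)

def domDelta (N : ℕ) (α : ℝ) (V : Fin N → ℝ → ℂ) : Prop :=
  (∀ j, MemW2 (V j)) ∧ (∀ j j', V j 0 = V j' 0) ∧
    (∀ j₀, (∑ j, deriv (V j) 0) = (α : ℂ) * V j₀ 0)

def pot (N k : ℕ) (α c : ℝ) (j : Fin N) (x : ℝ) : ℝ :=
  if (j : ℕ) < k then (x - α/(2*(k:ℝ) - (N:ℝ)))^2 - c else (x + α/(2*(k:ℝ) - (N:ℝ)))^2 - c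

def Tlin (N k : ℕ) (α c : ℝ) (V : Fin N → ℝ → ℂ) (j : Fin N) (x : ℝ) : ℂ :=
  -(deriv (deriv (V j)) x) + (pot N k α c j x : ℂ) * V j x

def qf (N k : ℕ) (α c : ℝ) (V : Fin N → ℝ → ℂ) : ℝ :=
  (∑ j, ∫ x in Set.Ioi (0:ℝ), Tlin N k α c V j x * (starRingEnd ℂ) (V j x)).re

def memL2k (N k : ℕ) (V : Fin N → ℝ → ℂ) : Prop :=
  ∀ j j' : Fin N, (((j:ℕ) < k ∧ (j':ℕ) < k) ∨ (k ≤ (j:ℕ) ∧ k ≤ (j':ℕ))) → V j =ᵐ[mu] V j'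

def phiProf (N k : ℕ) (α ω : ℝ) (j : Fin N) (x : ℝ) : ℝ :=
  if (j : ℕ) < k then Real.exp ((ω+1)/2) * Real.exp (-(x - α/(2*(k:ℝ) - (N:ℝ)))^2/2)
  else Real.exp ((ω+1)/2) * Real.exp (-(x + α/(2*(k:ℝ) - (N:ℝ)))^2/2)



/-- The function `Φ̃_{0,k}`: first `k` components `((N-k)/k) φ₀'`, last `N-k` components `-φ₀'`,
where `φ₀(x) = e^{-x²/2}`, so `φ₀'(x) = -x e^{-x²/2}`. -/
def tildePhi (N k : ℕ) (j : Fin N) (x : ℝ) : ℝ :=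
  if (j : ℕ) < k then (((N:ℝ) - (k:ℝ)) / (k:ℝ)) * (-x * Real.exp (-x^2/2))
  else -(-x * Real.exp (-x^2/2))

namespace T01A
open Topology

lemma mu_def : mu = volume.restrict (Set.Ioi (0:ℝ)) := rfl

def g (x : ℝ) : ℝ := Real.exp (-x^2/2)
def u1 (x : ℝ) : ℝ := x * g x
def u2 (x : ℝ) : ℝ := (1 - x^2) * g x
def u3 (x : ℝ) : ℝ := (x^3 - 3*x) * g x

lemma continuous_g : Continuous g := Real.continuous_exp.comp (((continuous_pow 2).neg).div_const 2)
lemma continuous_u1 : Continuous u1 := continuous_id.mul continuous_g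
lemma continuous_u2 : Continuous u2 := (continuous_const.sub (continuous_pow 2)).mul continuous_g
lemma continuous_u3 : Continuous u3 :=
  ((continuous_pow 3).sub (continuous_const.mul continuous_id)).mul continuous_g

lemma g_pos (x : ℝ) : 0 < g x := Real.exp_pos _
lemma u1_pos {x : ℝ} (hx : 0 < x) : 0 < u1 x := mul_pos hx (g_pos x)

lemma u2_zero : u2 0 = 1 := by unfold u2 g; norm_num

lemma hasDerivAt_g (x : ℝ) : HasDerivAt g (-x * g x) x := by
  have h1 : HasDerivAt (fun x : ℝ => -x^2/2) (-x) x := by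
    have := ((hasDerivAt_pow 2 x).neg).div_const 2
    refine this.congr_deriv ?_
    push_cast; ring
  have := h1.exp
  refine this.congr_deriv ?_
  rw [mul_comm]; rfl

lemma hasDerivAt_u1 (x : ℝ) : HasDerivAt u1 (u2 x) x := by
  have := (hasDerivAt_id x).mul (hasDerivAt_g x)
  refine this.congr_deriv ?_
  simp only [u2, id]; ring

lemma hasDerivAt_u2 (x : ℝ) : HasDerivAt u2 (u3 x) x := by
  have h1 : HasDerivAt (fun x : ℝ => 1 - x^2) (-(2*x)) x := by
    have := (hasDerivAt_pow 2 x).const_sub 1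
    refine this.congr_deriv ?_
    push_cast; ring
  have := h1.mul (hasDerivAt_g x)
  refine this.congr_deriv ?_
  simp only [u3, u2]; ring

lemma u3_eq (x : ℝ) : u3 x = (x^2 - 3) * u1 x := by unfold u3 u1; ring

lemma sq1 (x : ℝ) : x^2 ≤ 1 + x^6 := by
  nlinarith [sq_nonneg (x^3 - x), sq_nonneg (2*x^2 - 1)]

lemma sq1' (x : ℝ) : x^4 ≤ 1 + x^6 := by
  nlinarith [sq_nonneg (x^3 - x), sq_nonneg (2*x^2 - 1), sq_nonneg (x^2 - 1), sq_nonneg (x^3 - x^2), sq_nonneg (x^2-x)]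

/-- key L2 membership lemma -/
lemma memL2_gauss (q : ℝ → ℝ) (hq : Continuous q) (M : ℝ)
    (hb : ∀ x, 0 ≤ x → q x ^ 2 ≤ M * (1 + x^6)) :
    MemL2 (fun x => ((q x * g x : ℝ) : ℂ)) := by
  have hcont : Continuous fun x => ((q x * g x : ℝ) : ℂ) :=
    Complex.continuous_ofReal.comp (hq.mul continuous_g)
  rw [MemL2, memLp_two_iff_integrable_sq_norm (hcont.aestronglyMeasurable)]
  have hrw : (fun x => ‖((q x * g x : ℝ) : ℂ)‖ ^ 2) = fun x => (q x * g x)^2 := by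
    funext x; rw [Complex.norm_real, Real.norm_eq_abs, sq_abs]
  rw [hrw]
  have hpow : ∀ (s : ℝ) (x : ℝ), x ∈ Set.Ioi (0:ℝ) →
      x ^ s * Real.exp (-1 * x^2) = x ^ s * Real.exp (-x^2) := by
    intro s x hx; norm_num
  have h6 : IntegrableOn (fun x : ℝ => x^(6:ℝ) * Real.exp (-x^2)) (Set.Ioi 0) := by
    exact (integrableOn_rpow_mul_exp_neg_mul_sq one_pos (by norm_num : (-1:ℝ) < 6)).congr_fun
      (hpow 6) measurableSet_Ioi
  have h0 : IntegrableOn (fun x : ℝ => x^(0:ℝ) * Real.exp (-x^2)) (Set.Ioi 0) := by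
    exact (integrableOn_rpow_mul_exp_neg_mul_sq one_pos (by norm_num : (-1:ℝ) < 0)).congr_fun
      (hpow 0) measurableSet_Ioi
  have hbound : Integrable (fun x : ℝ => M * (x^(0:ℝ) * Real.exp (-x^2)) + M * (x^(6:ℝ) * Real.exp (-x^2))) mu := by
    rw [mu_def]
    exact (h0.const_mul M).add (h6.const_mul M)
  apply hbound.mono' ((hq.mul continuous_g).pow 2).aestronglyMeasurable
  rw [mu_def, ae_restrict_iff' measurableSet_Ioi]
  filter_upwards with x hx
  have hx0 : (0:ℝ) < x := hx
  have hgsq : g x ^ 2 = Real.exp (-x^2) := by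
    unfold g; rw [sq, ← Real.exp_add]; congr 1; ring
  have h1 : (q x * g x)^2 = q x ^2 * Real.exp (-x^2) := by rw [mul_pow, hgsq]
  rw [Real.norm_eq_abs, abs_of_nonneg (sq_nonneg _), Pi.pow_apply, Pi.mul_apply, h1]
  have h2 : q x ^2 * Real.exp (-x^2) ≤ (M * (1 + x^6)) * Real.exp (-x^2) :=
    mul_le_mul_of_nonneg_right (hb x hx0.le) (Real.exp_pos _).le
  have h3 : x ^ (0:ℝ) = 1 := Real.rpow_zero x
  have h4 : x ^ (6:ℝ) = x ^ (6:ℕ) := by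
    rw [show (6:ℝ) = ((6:ℕ):ℝ) by norm_num, Real.rpow_natCast]
  rw [h3, h4]
  nlinarith [Real.exp_pos (-x^2), h2]

lemma memL2_u1 : MemL2 (fun x => ((u1 x : ℝ) : ℂ)) :=
  memL2_gauss (fun x => x) continuous_id 1 (fun x _ => by
    show x ^ 2 ≤ 1 * (1 + x^6)
    nlinarith [sq1 x])

lemma memL2_u2 : MemL2 (fun x => ((u2 x : ℝ) : ℂ)) :=
  memL2_gauss (fun x => 1 - x^2) (continuous_const.sub (continuous_pow 2)) 4 (fun x _ => by
    show (1 - x^2) ^ 2 ≤ 4 * (1 + x^6)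
    nlinarith [sq1 x, sq1' x])

lemma const_on_Ioi {f : ℝ → ℂ} (hf : ∀ x ∈ Set.Ioi (0:ℝ), HasDerivAt f 0 x) :
    ∀ x ∈ Set.Ioi (0:ℝ), ∀ y ∈ Set.Ioi (0:ℝ), f x = f y := by
  have key : ∀ a b : ℝ, 0 < a → a ≤ b → f b = f a := by
    intro a b ha hab
    have hcont : ContinuousOn f (Set.Icc a b) := fun z hz =>
      ((hf z (lt_of_lt_of_le ha hz.1)).continuousAt).continuousWithinAt
    exact constant_of_has_deriv_right_zero hcont
      (fun z hz => (hf z (lt_of_lt_of_le ha hz.1)).hasDerivWithinAt) b ⟨hab, le_rfl⟩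
  intro x hx y hy
  rcases le_total x y with h | h
  · exact (key x y hx h).symm
  · exact key y x hy h

lemma mul_L2_integrable {p q : ℝ → ℂ} (hp : MemL2 p) (hq : MemL2 q) :
    Integrable (fun x => p x * q x) mu := by
  have h1 : (1:ENNReal)/1 = 1/2 + 1/2 := by
    rw [ENNReal.div_add_div_same, one_add_one_eq_two,
      ENNReal.div_self two_ne_zero ENNReal.ofNat_ne_top, div_one]
  have h2 : MemLp (p • q) 1 mu := hq.smul hp
  rw [memLp_one_iff_integrable] at h2
  exact h2.congr (Eventually.of_forall fun x => by simp [smul_eq_mul])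

lemma not_finite_mu : ¬ mu Set.univ < ⊤ := by
  rw [mu_def, Measure.restrict_apply_univ, Real.volume_Ioi]
  simp

/-- main uniqueness lemma -/
lemma solution_eq (u : ℝ → ℂ)
    (hu : ∀ x ∈ Set.Ioi (0:ℝ), DifferentiableAt ℝ u x)
    (hu' : ∀ x ∈ Set.Ioi (0:ℝ), DifferentiableAt ℝ (deriv u) x)
    (hL2u : MemL2 u) (hL2u' : MemL2 (deriv u))
    (hode : ∀ x ∈ Set.Ioi (0:ℝ), deriv (deriv u) x = ((x:ℂ)^2 - 3) * u x) :
    ∀ x ∈ Set.Ioi (0:ℝ), u x = (u 1 / ((u1 1 : ℝ) : ℂ)) * ((u1 x : ℝ) : ℂ) := by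
  set W : ℝ → ℂ := fun x => u x * ((u2 x : ℝ) : ℂ) - deriv u x * ((u1 x : ℝ) : ℂ) with hW_def
  have hW : ∀ x ∈ Set.Ioi (0:ℝ), HasDerivAt W 0 x := by
    intro x hx
    have h1 : HasDerivAt u (deriv u x) x := (hu x hx).hasDerivAt
    have h2 : HasDerivAt (deriv u) (((x:ℂ)^2 - 3) * u x) x := by
      rw [← hode x hx]; exact (hu' x hx).hasDerivAt
    have h3 := (hasDerivAt_u2 x).ofReal_comp
    have h4 := (hasDerivAt_u1 x).ofReal_comp
    have := (h1.mul h3).sub (h2.mul h4)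
    refine this.congr_deriv ?_
    have key : ((u3 x : ℝ) : ℂ) = ((x:ℂ)^2 - 3) * ((u1 x : ℝ) : ℂ) := by
      rw [u3_eq]; push_cast; ring
    rw [key]; ring
  have hWconst := const_on_Ioi hW
  have hWint : Integrable W mu := by
    apply Integrable.sub
    · exact mul_L2_integrable hL2u memL2_u2
    · exact mul_L2_integrable hL2u' memL2_u1
  have hW1 : W 1 = 0 := by
    have hae : W =ᵐ[mu] fun _ => W 1 := by
      rw [mu_def]
      exact (ae_restrict_iff' measurableSet_Ioi).2
        (Eventually.of_forall fun x hx => hWconst x hx 1 (by norm_num))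
    have := (hWint.congr hae)
    rw [integrable_const_iff] at this
    rcases this with h | h
    · exact h
    · exact absurd h.measure_univ_lt_top not_finite_mu
  have hWzero : ∀ x ∈ Set.Ioi (0:ℝ), u x * ((u2 x : ℝ) : ℂ) = deriv u x * ((u1 x : ℝ) : ℂ) := by
    intro x hx
    have := hWconst x hx 1 (by norm_num)
    rw [hW1] at this
    have : W x = 0 := this
    rw [hW_def] at this
    exact sub_eq_zero.mp this
  -- now the ratio
  intro x hx
  set R : ℝ → ℂ := fun y => u y / ((u1 y : ℝ) : ℂ) with hR_def
  have hu1ne : ∀ y : ℝ, y ∈ Set.Ioi (0:ℝ) → ((u1 y : ℝ) : ℂ) ≠ 0 := fun y hy =>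
    Complex.ofReal_ne_zero.mpr (ne_of_gt (u1_pos hy))
  have hR : ∀ y ∈ Set.Ioi (0:ℝ), HasDerivAt R 0 y := by
    intro y hy
    have h1 : HasDerivAt u (deriv u y) y := (hu y hy).hasDerivAt
    have h4 := (hasDerivAt_u1 y).ofReal_comp
    have := h1.div h4 (hu1ne y hy)
    refine this.congr_deriv ?_
    rw [← hWzero y hy]
    field_simp
    simp
  have hRconst := const_on_Ioi hR
  have := hRconst x hx 1 (by norm_num)
  have hx' : u x / ((u1 x : ℝ) : ℂ) = u 1 / ((u1 1 : ℝ) : ℂ) := this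
  rw [← hx']
  field_simp [hu1ne x hx]

theorem sum_if_lt {M : Type*} [AddCommMonoid M] (N k : ℕ) (hk : k ≤ N) (A B : M) :
    ∑ j : Fin N, (if (j:ℕ) < k then A else B) = k • A + (N - k) • B := by
  have hcard : (Finset.filter (fun x => x < k) (Finset.range N)).card = k := by
    rw [Finset.range_eq_Ico, Finset.Ico_filter_lt, Nat.card_Ico]
    omega
  have hcard2 : (Finset.filter (fun x => ¬ x < k) (Finset.range N)).card = N - k := by
    have := Finset.card_filter_add_card_filter_not (s := Finset.range N)
      (p := fun x => x < k)
    rw [hcard, Finset.card_range] at this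
    omega
  rw [Fin.sum_univ_eq_sum_range (fun i => if i < k then A else B), Finset.sum_ite,
    Finset.sum_const, Finset.sum_const, hcard, hcard2]

/-- limit from the right determines the value at 0 of a function continuous on `Ici 0`. -/
lemma limit_at_zero {f : ℝ → ℂ} (hf : ContinuousOn f (Set.Ici (0:ℝ))) {c : ℂ} {φ : ℝ → ℝ}
    (hφ : Continuous φ) (heq : ∀ x ∈ Set.Ioi (0:ℝ), f x = c * ((φ x : ℝ) : ℂ)) :
    f 0 = c * ((φ 0 : ℝ) : ℂ) := by
  have h1 : Tendsto f (𝓝[>] (0:ℝ)) (𝓝 (f 0)) :=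
    (hf 0 Set.self_mem_Ici).mono Set.Ioi_subset_Ici_self
  have h2 : Tendsto (fun x => c * ((φ x : ℝ) : ℂ)) (𝓝[>] (0:ℝ)) (𝓝 (c * ((φ 0 : ℝ) : ℂ))) :=
    ((continuous_const.mul (Complex.continuous_ofReal.comp hφ)).tendsto 0).mono_left
      nhdsWithin_le_nhds
  have h3 : Tendsto f (𝓝[>] (0:ℝ)) (𝓝 (c * ((φ 0 : ℝ) : ℂ))) := by
    apply h2.congr'
    filter_upwards [self_mem_nhdsWithin] with x hx
    exact (heq x hx).symm
  exact tendsto_nhds_unique h1 h3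

/-! ### facts about `tildePhi` -/

def Cc (N k : ℕ) (j : Fin N) : ℝ := if (j:ℕ) < k then ((N:ℝ) - k)/k else -1

lemma tildePhi_eq (N k : ℕ) (j : Fin N) :
    (fun x => ((tildePhi N k j x : ℝ) : ℂ)) = fun x => ((Cc N k j * -(u1 x) : ℝ) : ℂ) := by
  funext x
  norm_cast
  unfold tildePhi Cc u1 g
  split <;> ring

def F (C : ℝ) : ℝ → ℂ := fun x => ((C * -(u1 x) : ℝ) : ℂ)
def F' (C : ℝ) : ℝ → ℂ := fun x => ((C * -(u2 x) : ℝ) : ℂ)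
def F'' (C : ℝ) : ℝ → ℂ := fun x => ((C * -(u3 x) : ℝ) : ℂ)

lemma F_hasDeriv (C : ℝ) (x : ℝ) : HasDerivAt (F C) (F' C x) x :=
  (((hasDerivAt_u1 x).neg).const_mul C).ofReal_comp

lemma F'_hasDeriv (C : ℝ) (x : ℝ) : HasDerivAt (F' C) (F'' C x) x :=
  (((hasDerivAt_u2 x).neg).const_mul C).ofReal_comp

lemma F_deriv (C : ℝ) : deriv (F C) = F' C := funext fun x => (F_hasDeriv C x).deriv

lemma F'_deriv (C : ℝ) : deriv (F' C) = F'' C := funext fun x => (F'_hasDeriv C x).deriv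

lemma memW2_F (C : ℝ) : MemW2 (F C) := by
  have hcF : Continuous (F C) :=
    Complex.continuous_ofReal.comp (continuous_const.mul continuous_u1.neg)
  have hcF' : Continuous (F' C) :=
    Complex.continuous_ofReal.comp (continuous_const.mul continuous_u2.neg)
  have hL2F : MemL2 (F C) := by
    have h : F C = fun x => (((fun y => C * -y) x * g x : ℝ) : ℂ) := by
      funext x; unfold F u1; norm_cast; ring
    rw [h]
    exact memL2_gauss _ (continuous_const.mul continuous_neg) (C^2) (fun x _ => by
      show (C * -x)^2 ≤ C^2 * (1 + x^6)
      nlinarith [sq1 x, sq_nonneg C])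
  have hL2F' : MemL2 (F' C) := by
    have h : F' C = fun x => (((fun y => C * -(1 - y^2)) x * g x : ℝ) : ℂ) := by
      funext x; unfold F' u2; norm_cast; ring
    rw [h]
    exact memL2_gauss _ (continuous_const.mul (continuous_const.sub (continuous_pow 2)).neg)
      (4*C^2) (fun x _ => by
        show (C * -(1 - x^2))^2 ≤ 4*C^2 * (1 + x^6)
        nlinarith [sq1 x, sq1' x, sq_nonneg C, sq_nonneg (C*x), sq_nonneg (C*x^2), sq_nonneg (C*x^3)])
  have hL2F'' : MemL2 (F'' C) := by
    have h : F'' C = fun x => (((fun y => C * -(y^3 - 3*y)) x * g x : ℝ) : ℂ) := by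
      funext x; unfold F'' u3; norm_cast; ring
    rw [h]
    exact memL2_gauss _ (continuous_const.mul ((continuous_pow 3).sub
      (continuous_const.mul continuous_id)).neg) (16*C^2) (fun x _ => by
        show (C * -(x^3 - 3*x))^2 ≤ 16*C^2 * (1 + x^6)
        nlinarith [sq1 x, sq1' x, sq_nonneg C, sq_nonneg (C*x), sq_nonneg (C*x^2), sq_nonneg (C*x^3)])
  have hL2x2 : MemL2 (fun x : ℝ => ((x:ℂ))^2 * F C x) := by
    have h : (fun x : ℝ => ((x:ℂ))^2 * F C x) = fun x : ℝ => (((fun y => C * -(y^3)) x * g x : ℝ) : ℂ) := by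
      funext x; unfold F u1; push_cast; ring
    rw [h]
    exact memL2_gauss _ (continuous_const.mul (continuous_pow 3).neg) (C^2) (fun x _ => by
      show (C * -(x^3))^2 ≤ C^2 * (1 + x^6)
      nlinarith [sq_nonneg C, sq_nonneg (C*x^3)])
  refine ⟨⟨⟨hcF.continuousOn, fun x _ => (F_hasDeriv C x).differentiableAt, hL2F, ?_⟩,
    ?_, ?_, ?_⟩, hL2x2⟩
  · rw [F_deriv]; exact hL2F'
  · rw [F_deriv]; exact hcF'.continuousOn
  · rw [F_deriv]; exact fun x _ => (F'_hasDeriv C x).differentiableAt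
  · rw [F_deriv, F'_deriv]; exact hL2F''

lemma pot_eq (N : ℕ) (j : Fin N) (x : ℝ) : pot N 0 0 3 j x = x^2 - 3 := by
  simp [pot]

end T01A

open T01A in
/-- the kernel of `T⁰₁` restricted to `L²_k(𝒢)` is the span of `Φ̃_{0,k}`. -/
theorem T01_kernel_symmetric (N k : ℕ) (hN : 3 ≤ N) (hk1 : 1 ≤ k) (hk2 : k ≤ (N - 1) / 2) :
    (domDelta N 0 (fun j x => (tildePhi N k j x : ℂ)) ∧
      memL2k N k (fun j x => (tildePhi N k j x : ℂ)) ∧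
      (∀ j : Fin N, ∀ x ∈ Set.Ioi (0:ℝ),
        Tlin N 0 0 3 (fun j x => (tildePhi N k j x : ℂ)) j x = 0)) ∧
    (∀ V : Fin N → ℝ → ℂ, domDelta N 0 V → memL2k N k V →
      (∀ j : Fin N, ∀ x ∈ Set.Ioi (0:ℝ), Tlin N 0 0 3 V j x = 0) →
      ∃ c : ℂ, ∀ j : Fin N, ∀ x ∈ Set.Ioi (0:ℝ), V j x = c * (tildePhi N k j x : ℂ)) := by
  have hkN : k < N := by omega
  have hk0 : (k:ℝ) ≠ 0 := Nat.cast_ne_zero.mpr (by omega)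
  have hk0C : (k:ℂ) ≠ 0 := Nat.cast_ne_zero.mpr (by omega)
  constructor
  · -- forward direction
    refine ⟨⟨?_, ?_, ?_⟩, ?_, ?_⟩
    · -- MemW2
      intro j
      show MemW2 (fun x => ((tildePhi N k j x : ℝ) : ℂ))
      rw [tildePhi_eq]
      exact memW2_F (Cc N k j)
    · -- equal values at 0
      intro j j'
      have h : ∀ j'' : Fin N, ((tildePhi N k j'' 0 : ℝ) : ℂ) = 0 := by
        intro j''; unfold tildePhi; split <;> norm_num
      show ((tildePhi N k j 0 : ℝ) : ℂ) = ((tildePhi N k j' 0 : ℝ) : ℂ)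
      rw [h j, h j']
    · -- sum of derivatives at 0
      intro j₀
      have hderiv : ∀ j : Fin N, deriv (fun x => ((tildePhi N k j x : ℝ) : ℂ)) 0
          = (if (j:ℕ) < k then ((-(((N:ℝ) - k)/k) : ℝ) : ℂ) else ((1:ℝ):ℂ)) := by
        intro j
        rw [tildePhi_eq]
        have : deriv (F (Cc N k j)) 0 = F' (Cc N k j) 0 := by rw [F_deriv]
        rw [show (fun x => ((Cc N k j * -(u1 x) : ℝ):ℂ)) = F (Cc N k j) from rfl, this]
        unfold F' Cc
        rw [u2_zero]
        split <;> norm_num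
      calc (∑ j : Fin N, deriv ((fun j x => ((tildePhi N k j x : ℝ) : ℂ)) j) 0)
          = ∑ j : Fin N, (if (j:ℕ) < k then ((-(((N:ℝ) - k)/k) : ℝ) : ℂ) else ((1:ℝ):ℂ)) :=
            Finset.sum_congr rfl (fun j _ => hderiv j)
        _ = k • ((-(((N:ℝ) - k)/k) : ℝ) : ℂ) + (N - k) • ((1:ℝ):ℂ) :=
            sum_if_lt N k hkN.le _ _
        _ = ((0:ℝ):ℂ) * ((tildePhi N k j₀ 0 : ℝ) : ℂ) := by
            rw [nsmul_eq_mul, nsmul_eq_mul]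
            push_cast [Nat.cast_sub hkN.le]
            field_simp
            ring
    · -- memL2k
      intro j j' h
      have : (fun x => ((tildePhi N k j x : ℝ) : ℂ)) = fun x => ((tildePhi N k j' x : ℝ) : ℂ) := by
        funext x
        unfold tildePhi
        rcases h with ⟨h1, h2⟩ | ⟨h1, h2⟩
        · rw [if_pos h1, if_pos h2]
        · rw [if_neg (Nat.not_lt.2 h1), if_neg (Nat.not_lt.2 h2)]
      show (fun x => ((tildePhi N k j x : ℝ) : ℂ)) =ᵐ[mu] fun x => ((tildePhi N k j' x : ℝ) : ℂ)
      rw [this]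
    · -- Tlin = 0
      intro j x hx
      show -(deriv (deriv (fun y => ((tildePhi N k j y : ℝ) : ℂ))) x)
        + ((pot N 0 0 3 j x : ℝ) : ℂ) * ((tildePhi N k j x : ℝ) : ℂ) = 0
      rw [pot_eq]
      rw [show (fun y => ((tildePhi N k j y : ℝ) : ℂ)) = F (Cc N k j) from tildePhi_eq N k j,
        F_deriv, F'_deriv]
      have h2 : ((tildePhi N k j x : ℝ) : ℂ) = F (Cc N k j) x := congrFun (tildePhi_eq N k j) x
      rw [h2]
      show -(((Cc N k j * -(u3 x) : ℝ) : ℂ)) + ((x^2 - 3 : ℝ) : ℂ) * ((Cc N k j * -(u1 x) : ℝ) : ℂ) = 0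
      have hr : (Cc N k j * -(u3 x) : ℝ) = (x^2 - 3) * (Cc N k j * -(u1 x)) := by
        rw [u3_eq]; ring
      rw [hr]
      push_cast
      ring
  · -- backward direction
    intro V hdom hmem hT
    obtain ⟨hW2, hbc, hsum⟩ := hdom
    -- ODE in explicit form
    have hode : ∀ j : Fin N, ∀ x ∈ Set.Ioi (0:ℝ),
        deriv (deriv (V j)) x = ((x:ℂ)^2 - 3) * V j x := by
      intro j x hx
      have h := hT j x hx
      rw [Tlin, pot_eq] at h
      push_cast at h
      linear_combination -h
    -- each component is a multiple of u1
    set cj : Fin N → ℂ := fun j => V j 1 / ((u1 1 : ℝ) : ℂ) with hcj_def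
    have hsol : ∀ j : Fin N, ∀ x ∈ Set.Ioi (0:ℝ), V j x = cj j * ((u1 x : ℝ) : ℂ) := by
      intro j
      obtain ⟨⟨⟨hcont, hdiff, hL2, hL2'⟩, hcont', hdiff', hL2''⟩, hx2⟩ := hW2 j
      exact solution_eq (V j) hdiff hdiff' hL2 hL2' (hode j)
    -- group constancy
    have hu1ne : ∀ y : ℝ, y ∈ Set.Ioi (0:ℝ) → ((u1 y : ℝ) : ℂ) ≠ 0 := fun y hy =>
      Complex.ofReal_ne_zero.mpr (ne_of_gt (u1_pos hy))
    have hgroup : ∀ j j' : Fin N,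
        (((j:ℕ) < k ∧ (j':ℕ) < k) ∨ (k ≤ (j:ℕ) ∧ k ≤ (j':ℕ))) → cj j = cj j' := by
      intro j j' h
      haveI : NeBot (ae mu) := by
        refine ae_neBot.2 (fun hc => ?_)
        have := not_finite_mu
        rw [hc] at this
        simp at this
      have hx_mem : ∀ᵐ x ∂mu, x ∈ Set.Ioi (0:ℝ) := by
        rw [mu_def]; exact ae_restrict_mem measurableSet_Ioi
      obtain ⟨x, hxeq, hx⟩ := ((hmem j j' h).and hx_mem).exists
      rw [hsol j x hx, hsol j' x hx] at hxeq
      exact mul_right_cancel₀ (hu1ne x hx) hxeq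
    -- derivative values at 0
    have hderiv0 : ∀ j : Fin N, deriv (V j) 0 = cj j := by
      intro j
      obtain ⟨⟨⟨hcont, hdiff, hL2, hL2'⟩, hcont', hdiff', hL2''⟩, hx2⟩ := hW2 j
      have heq : ∀ x ∈ Set.Ioi (0:ℝ), deriv (V j) x = cj j * ((u2 x : ℝ) : ℂ) := by
        intro x hx
        have hev : V j =ᶠ[nhds x] fun y => cj j * ((u1 y : ℝ) : ℂ) :=
          Filter.eventually_of_mem (Ioi_mem_nhds hx) (fun y hy => hsol j y hy)
        rw [hev.deriv_eq]
        exact (((hasDerivAt_u1 x).ofReal_comp).const_mul (cj j)).deriv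
      have := limit_at_zero hcont' continuous_u2 heq
      rw [this, u2_zero]
      norm_num
    -- the two constants
    set j0 : Fin N := ⟨0, by omega⟩ with hj0_def
    set jk : Fin N := ⟨k, hkN⟩ with hjk_def
    set a : ℂ := cj j0 with ha_def
    set b : ℂ := cj jk with hb_def
    have hcjval : ∀ j : Fin N, cj j = if (j:ℕ) < k then a else b := by
      intro j
      split
      · next h => exact hgroup j j0 (Or.inl ⟨h, by simp [hj0_def]; omega⟩)
      · next h => exact hgroup j jk (Or.inr ⟨Nat.not_lt.1 h, by simp [hjk_def]⟩)
    -- boundary condition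
    have hsum0 : (k:ℂ) * a + ((N:ℂ) - k) * b = 0 := by
      have h := hsum j0
      rw [show ((0:ℝ):ℂ) = 0 from rfl, zero_mul] at h
      have h2 : (∑ j : Fin N, deriv (V j) 0) = ∑ j : Fin N, (if (j:ℕ) < k then a else b) :=
        Finset.sum_congr rfl (fun j _ => by rw [hderiv0 j, hcjval j])
      rw [h2, sum_if_lt N k hkN.le] at h
      rw [nsmul_eq_mul, nsmul_eq_mul] at h
      push_cast [Nat.cast_sub hkN.le] at h
      exact h
    have hab : a = -(((N:ℂ) - k)/k) * b := by
      field_simp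
      linear_combination hsum0
    refine ⟨b, fun j x hx => ?_⟩
    rw [hsol j x hx, hcjval j]
    by_cases hj : (j:ℕ) < k
    · rw [if_pos hj, hab]
      show -(((N:ℂ) - k)/k) * b * ((u1 x : ℝ) : ℂ) = b * ((tildePhi N k j x : ℝ) : ℂ)
      unfold tildePhi
      rw [if_pos hj]
      unfold u1 g
      push_cast
      ring
    · rw [if_neg hj]
      show b * ((u1 x : ℝ) : ℂ) = b * ((tildePhi N k j x : ℝ) : ℂ)
      unfold tildePhi
      rw [if_neg hj]
      unfold u1 g
      push_cast
      ring
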